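/- Let p be an odd prime, s a positive integer, d(s) = ⌊ s(p−1)/(p−2) ⌋ + 1, and E_s(x) = Σ_{k=0}^{d(s)} x^k/k!. Then for every μ ∈ ℤ_p: every coefficient p^k μ^k / k! of the formal power series e^{pμx} lies in ℤ_p (so e^{pμx} ∈ ℤ_p[[x]]), E_s(pμx) ∈ ℤ_p[x], and e^{pμx} ≡ E_s(pμx) (mod p^s), i.e. every coefficient of the power series e^{pμx} − E_s(pμx) lies in p^s ℤ_p. -/

import Mathlib

def truncDeg (p s : ℕ) : ℕ := s * (p - 1) / (p - 2) + 1

lemma term_norm_le (p : ℕ) [Fact p.Prime] (μ : ℤ_[p]) (n : ℕ) :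
    ‖((p : ℚ_[p]) * (μ : ℚ_[p])) ^ n / (n.factorial : ℚ_[p])‖ ≤
      (p : ℝ) ^ ((padicValNat p n.factorial : ℤ) - n) := by
  have hp1 : (1 : ℝ) < p := by exact_mod_cast (Fact.out : p.Prime).one_lt
  have hp0 : (0 : ℝ) < p := lt_trans one_pos hp1
  have hfac : ‖(n.factorial : ℚ_[p])‖ = (p : ℝ) ^ (-(padicValNat p n.factorial : ℤ)) := by
    rw [Padic.norm_eq_zpow_neg_valuation (by exact_mod_cast n.factorial_ne_zero), Padic.valuation_natCast]
  rw [norm_div, mul_pow, norm_mul, norm_pow, norm_pow, Padic.norm_p, hfac]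
  have hμ : ‖(μ : ℚ_[p])‖ ^ n ≤ 1 := pow_le_one₀ (norm_nonneg _) μ.norm_le_one
  have hden : (0:ℝ) < (p : ℝ) ^ (-(padicValNat p n.factorial : ℤ)) := zpow_pos hp0 _
  calc ((p:ℝ)⁻¹) ^ n * ‖(μ : ℚ_[p])‖ ^ n / (p:ℝ) ^ (-(padicValNat p n.factorial : ℤ))
      ≤ ((p:ℝ)⁻¹) ^ n * 1 / (p:ℝ) ^ (-(padicValNat p n.factorial : ℤ)) := by
        gcongr
    _ = (p : ℝ) ^ ((padicValNat p n.factorial : ℤ) - n) := by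
        rw [mul_one, inv_pow, ← zpow_natCast (p:ℝ) n, ← zpow_neg, div_eq_mul_inv, ← zpow_neg,
          ← zpow_add₀ (ne_of_gt hp0)]
        congr 1
        ring

lemma val_fact_le (p : ℕ) [Fact p.Prime] (n : ℕ) : padicValNat p n.factorial ≤ n := by
  have h := sub_one_mul_padicValNat_factorial (p := p) n
  have hp2 : 2 ≤ p := (Fact.out : p.Prime).two_le
  have h1 : (p - 1) * padicValNat p n.factorial ≤ n := h ▸ Nat.sub_le _ _
  have h2 : padicValNat p n.factorial ≤ (p - 1) * padicValNat p n.factorial :=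
    Nat.le_mul_of_pos_left _ (by omega)
  omega

lemma val_fact_add_s_le (p : ℕ) [Fact p.Prime] (hodd : p ≠ 2) (s n : ℕ)
    (hn : truncDeg p s + 1 ≤ n) : s + padicValNat p n.factorial ≤ n := by
  have hp3 : 3 ≤ p := by
    have := (Fact.out : p.Prime).two_le
    rcases Nat.lt_or_ge p 3 with h | h
    · interval_cases p <;> simp_all
    · exact h
  set v := padicValNat p n.factorial with hv
  set q := s * (p - 1) / (p - 2) with hq
  have hleg : (p - 1) * v = n - (p.digits n).sum := sub_one_mul_padicValNat_factorial (p := p) n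
  have hds : (p.digits n).sum ≤ n := Nat.digit_sum_le p n
  have hdm := Nat.div_add_mod (s * (p - 1)) (p - 2)
  rw [← hq] at hdm
  have hmod : s * (p - 1) % (p - 2) < p - 2 := Nat.mod_lt _ (by omega)
  have hn' : q + 2 ≤ n := by
    have : truncDeg p s = q + 1 := rfl
    omega
  have key : s * (p - 1) < (p - 2) * q + (p - 2) := by omega
  have hmul : (p - 2) * (q + 2) ≤ (p - 2) * n := Nat.mul_le_mul_left _ hn'
  have e0 : (p - 2) * (q + 2) = (p - 2) * q + 2 * (p - 2) := by ring
  have h1 : s * (p - 1) ≤ (p - 2) * n := by omega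
  have e1 : (p - 1) * n = (p - 2) * n + n := by
    have h3 : p - 1 = (p - 2) + 1 := by omega
    rw [h3]; ring
  have e2 : (p - 1) * (s + v) = s * (p - 1) + (p - 1) * v := by ring
  have h2 : (p - 1) * (s + v) ≤ (p - 1) * n := by omega
  exact Nat.le_of_mul_le_mul_left h2 (by omega)

noncomputable def truncExp (p : ℕ) [Fact p.Prime] (s : ℕ) (μ : ℤ_[p]) : Polynomial ℚ_[p] :=
  ∑ k ∈ Finset.range (truncDeg p s + 1),
    Polynomial.C (((p : ℚ_[p]) * (μ : ℚ_[p])) ^ k / (k.factorial : ℚ_[p])) * Polynomial.X ^ k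

lemma truncExp_coeff (p : ℕ) [Fact p.Prime] (s : ℕ) (μ : ℤ_[p]) (n : ℕ) :
    (truncExp p s μ).coeff n =
      if n ≤ truncDeg p s then ((p : ℚ_[p]) * (μ : ℚ_[p])) ^ n / (n.factorial : ℚ_[p])
      else 0 := by
  rw [truncExp, Polynomial.finset_sum_coeff]
  simp only [Polynomial.coeff_C_mul, Polynomial.coeff_X_pow, mul_ite, mul_one, mul_zero]
  rw [Finset.sum_ite_eq (Finset.range (truncDeg p s + 1)) n]
  simp [Finset.mem_range, Nat.lt_succ_iff]

lemma rescale_exp_coeff (p : ℕ) [Fact p.Prime] (μ : ℤ_[p]) (n : ℕ) :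
    PowerSeries.coeff n
        (PowerSeries.rescale ((p : ℚ_[p]) * (μ : ℚ_[p])) (PowerSeries.exp ℚ_[p])) =
      ((p : ℚ_[p]) * (μ : ℚ_[p])) ^ n / (n.factorial : ℚ_[p]) := by
  rw [PowerSeries.coeff_rescale, PowerSeries.coeff_exp]
  simp [div_eq_mul_inv, eq_ratCast, Rat.cast_inv]

theorem truncExp_congr_exp
    (p : ℕ) [Fact p.Prime] (hodd : p ≠ 2) (s : ℕ) (hs : 0 < s) (μ : ℤ_[p]) :
    (∀ k : ℕ, ‖PowerSeries.coeff k
        (PowerSeries.rescale ((p : ℚ_[p]) * (μ : ℚ_[p])) (PowerSeries.exp ℚ_[p]))‖ ≤ 1) ∧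
    (∀ k : ℕ, ‖(truncExp p s μ).coeff k‖ ≤ 1) ∧
    (∀ k : ℕ, ‖PowerSeries.coeff k
        (PowerSeries.rescale ((p : ℚ_[p]) * (μ : ℚ_[p])) (PowerSeries.exp ℚ_[p]))
        - (truncExp p s μ).coeff k‖ ≤ (p : ℝ) ^ (-(s : ℤ))) := by
  have hp1 : (1 : ℝ) < p := by exact_mod_cast (Fact.out : p.Prime).one_lt
  have hterm1 : ∀ k : ℕ, ‖((p : ℚ_[p]) * (μ : ℚ_[p])) ^ k / (k.factorial : ℚ_[p])‖ ≤ 1 := by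
    intro k
    refine (term_norm_le p μ k).trans ?_
    calc (p : ℝ) ^ ((padicValNat p k.factorial : ℤ) - k) ≤ (p:ℝ) ^ (0:ℤ) := by
          apply zpow_le_zpow_right₀ hp1.le
          have := val_fact_le p k
          omega
      _ = 1 := zpow_zero _
  refine ⟨?_, ?_, ?_⟩
  · intro k; rw [rescale_exp_coeff]; exact hterm1 k
  · intro k; rw [truncExp_coeff]
    split
    · exact hterm1 k
    · simp
  · intro k
    rw [rescale_exp_coeff, truncExp_coeff]
    split
    · simp [zpow_nonneg (le_trans zero_le_one hp1.le)]
    · rename_i hk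
      rw [sub_zero]
      refine (term_norm_le p μ k).trans ?_
      apply zpow_le_zpow_right₀ hp1.le
      have := val_fact_add_s_le p hodd s k (by omega)
      omega
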